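/- Let H be a subgroup of a finite group G and γ ∈ G. The restriction to H of the indicator function of the conjugacy class O(γ) of γ in G has Fourier expansion δ_{O(γ)}|_H = (1/|C(γ)|) · Σ_{ρ ∈ Irr(H)} χ_ρ · Tr(Ind_H^G(ρ)(γ⁻¹)), where C(γ) is the centralizer of γ in G. -/

import Mathlib

open scoped Classical in
/-- The character of the representation of `G` induced from a representation of a
subgroup `H`, computed by the standard induced character formula
`Tr(Ind_H^G ρ)(g) = |H|⁻¹ ∑_{x ∈ G, x⁻¹gx ∈ H} χ_ρ(x⁻¹gx)`. -/
noncomputable def inducedCharacter {G : Type} [Group G] [Fintype G] (H : Subgroup G)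
    (χ : H → ℂ) (g : G) : ℂ :=
  (Nat.card H : ℂ)⁻¹ *
    ∑ x : G, if h : x⁻¹ * g * x ∈ H then χ ⟨x⁻¹ * g * x, h⟩ else 0

open MonoidAlgebra CategoryTheory

variable {K : Type} [Group K] [Fintype K]

instance : FiniteDimensional ℂ (MonoidAlgebra ℂ K) := Module.Finite.equiv (MonoidAlgebra.coeffLinearEquiv ℂ).symm

noncomputable instance (S : Submodule (MonoidAlgebra ℂ K) (MonoidAlgebra ℂ K)) :
    FiniteDimensional ℂ S :=
  FiniteDimensional.of_injective ((S.subtype).restrictScalars ℂ) (fun _ _ h => Subtype.ext h)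

namespace StmtAux

variable (K) in
abbrev A := MonoidAlgebra ℂ K

/-- The representation of `K` on a left ideal `S` of the group algebra. -/
noncomputable def rhoS (S : Submodule (A K) (A K)) : Representation ℂ K S where
  toFun g :=
    { toFun := fun v => (single g (1:ℂ) : A K) • v
      map_add' := fun v w => smul_add _ v w
      map_smul' := fun c v => by
        apply Subtype.ext
        push_cast [Submodule.coe_smul]
        rw [smul_comm]
        rfl }
  map_one' := by
    ext v
    simp [MonoidAlgebra.one_def.symm]
  map_mul' := fun g h => by
    refine LinearMap.ext fun v => ?_
    simp only [LinearMap.coe_mk, AddHom.coe_mk, Module.End.mul_apply]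
    rw [← mul_smul, MonoidAlgebra.single_mul_single, one_mul]

@[simp] lemma rhoS_apply (S : Submodule (A K) (A K)) (g : K) (v : S) :
    rhoS S g v = (single g (1:ℂ) : A K) • v := rfl

/-- A subrepresentation, as a representation. -/
noncomputable def resRep {V : FDRep ℂ K} (p : Submodule ℂ V)
    (hp : ∀ g : K, ∀ x ∈ p, V.ρ g x ∈ p) : Representation ℂ K p where
  toFun g := (V.ρ g).restrict (hp g)
  map_one' := by ext x; simp [LinearMap.restrict_apply]
  map_mul' g h := by ext x; simp [LinearMap.restrict_apply]

noncomputable def toFDRep (S : Submodule (A K) (A K)) : FDRep ℂ K := FDRep.of (rhoS S)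

lemma simple_toFDRep (S : Submodule (A K) (A K)) (hS : IsSimpleModule (A K) S) :
    Simple (toFDRep S) := by
  have : Nontrivial S := IsSimpleModule.nontrivial (A K) S
  constructor
  intro Y f m
  constructor
  · intro hiso hf0
    obtain ⟨v, hv⟩ := exists_ne (0 : S)
    subst hf0
    have h1 : CategoryTheory.inv (0 : Y ⟶ toFDRep S) ≫ (0 : Y ⟶ toFDRep S)
        = 𝟙 (toFDRep S) := IsIso.inv_hom_id _
    rw [Limits.comp_zero] at h1
    apply hv
    have h2 : ((𝟙 (toFDRep S) : toFDRep S ⟶ toFDRep S).hom.hom.hom : S →ₗ[ℂ] S) v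
        = (((0 : toFDRep S ⟶ toFDRep S)).hom.hom.hom : S →ₗ[ℂ] S) v := by rw [h1]
    exact h2
  · intro hf
    set φ : Y →ₗ[ℂ] S := (f.hom.hom.hom : _ →ₗ[ℂ] _) with hφdef
    -- injectivity
    have hker : ∀ g : K, ∀ x ∈ LinearMap.ker φ, Y.ρ g x ∈ LinearMap.ker φ := by
      intro g x hx
      have : φ (Y.ρ g x) = (toFDRep S).ρ g (φ x) := congrArg (fun t => t.hom.hom x) (f.comm g)
      simp only [LinearMap.mem_ker] at hx ⊢
      rw [this, hx]; exact map_zero ((toFDRep S).ρ g)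
    let ι : FDRep.of (resRep (LinearMap.ker φ) hker) ⟶ Y :=
      ⟨FGModuleCat.ofHom (LinearMap.ker φ).subtype, fun g => rfl⟩
    have hι : ι ≫ f = 0 := by
      ext x
      exact x.2
    have hι0 : ι = 0 := by
      rw [← cancel_mono f, hι, Limits.zero_comp]
    have hinj : Function.Injective φ := by
      rw [← LinearMap.ker_eq_bot]
      rw [Submodule.eq_bot_iff]
      intro x hx
      have h := congrArg Action.Hom.hom hι0
      have h2 : ((LinearMap.ker φ).subtype) ⟨x, hx⟩
          = ((0 : _ →ₗ[ℂ] _)) (⟨x, hx⟩ : LinearMap.ker φ) :=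
          congrArg (fun t => t.hom.hom.hom (⟨x, hx⟩ : LinearMap.ker φ)) hι0
      simpa using h2
    -- surjectivity
    let p' : Submodule (A K) S :=
      { carrier := (LinearMap.range φ : Set S)
        add_mem' := fun ha hb => add_mem ha hb
        zero_mem' := zero_mem _
        smul_mem' := by
          intro b v hv
          induction b using MonoidAlgebra.induction_on with
          | of g =>
            obtain ⟨y, hy⟩ := hv
            refine ⟨Y.ρ g y, ?_⟩
            have : φ (Y.ρ g y) = (toFDRep S).ρ g (φ y) := congrArg (fun t => t.hom.hom y) (f.comm g)
            rw [this, hy]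
            rfl
          | add b b' hb hb' => rw [add_smul]; exact add_mem hb hb'
          | smul c b hb => rw [smul_assoc]; exact Submodule.smul_mem _ c hb }
    have hp' : p' = ⊤ := by
      haveI := hS
      rcases eq_bot_or_eq_top p' with h | h
      · exfalso
        apply hf
        ext y
        have : φ y ∈ p' := ⟨y, rfl⟩
        rw [h] at this
        exact (show φ y = 0 by simpa using this)
      · exact h
    have hsurj : Function.Surjective φ := by
      intro v
      have : v ∈ p' := by rw [hp']; trivial
      exact this
    let e := LinearEquiv.ofBijective φ ⟨hinj, hsurj⟩
    let ginv : toFDRep S ⟶ Y :=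
      ⟨FGModuleCat.ofHom (e.symm : S →ₗ[ℂ] Y), by
        intro g
        apply FGModuleCat.hom_ext
        apply LinearMap.ext
        intro v
        apply hinj
        show φ (e.symm ((toFDRep S).ρ g v)) = φ (Y.ρ g (e.symm v))
        have h2 : φ (Y.ρ g (e.symm v)) = (toFDRep S).ρ g (φ (e.symm v)) :=
          congrArg (fun t => t.hom.hom (e.symm v)) (f.comm g)
        rw [h2]
        have h3 : φ (e.symm ((toFDRep S).ρ g v)) = (toFDRep S).ρ g v :=
          e.apply_symm_apply _
        rw [h3]
        congr 1
        exact (e.apply_symm_apply v).symm⟩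
    refine ⟨⟨ginv, ?_, ?_⟩⟩
    · ext y
      exact e.symm_apply_apply y
    · ext v
      exact e.apply_symm_apply v

end StmtAux

namespace StmtAux

variable {K : Type} [Group K] [Fintype K]

noncomputable def aElt (f : K → ℂ) : A K := ∑ h : K, single h (f h)

lemma aElt_mul_single (f : K → ℂ) (hf : ∀ x y, f (x * y * x⁻¹) = f y) (g : K) :
    aElt f * single g (1:ℂ) = single g (1:ℂ) * aElt f := by
  rw [aElt, Finset.sum_mul, Finset.mul_sum]
  refine Fintype.sum_equiv (MulAut.conj g⁻¹).toEquiv _ _ ?_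
  intro h
  show single h (f h) * single g 1 = single g 1 * single (g⁻¹ * h * g⁻¹⁻¹) (f (g⁻¹ * h * g⁻¹⁻¹))
  rw [hf, MonoidAlgebra.single_mul_single, MonoidAlgebra.single_mul_single, one_mul, mul_one,
    inv_inv]
  congr 1
  group

lemma aElt_comm (f : K → ℂ) (hf : ∀ x y, f (x * y * x⁻¹) = f y) (b : A K) :
    aElt f * b = b * aElt f := by
  induction b using MonoidAlgebra.induction_on with
  | of g => exact aElt_mul_single f hf g
  | add b b' hb hb' => rw [mul_add, add_mul, hb, hb']
  | smul c b hb => rw [mul_smul_comm, smul_mul_assoc, hb]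

theorem classfn_eq_zero (f : K → ℂ) (hf : ∀ x y, f (x * y * x⁻¹) = f y)
    (h0 : ∀ W : FDRep ℂ K, Simple W → ∑ h : K, f h * W.character h = 0) (g : K) : f g = 0 := by
  classical
  have key : ∀ S : Submodule (A K) (A K), IsSimpleModule (A K) S →
      ∀ v : S, aElt f • v = 0 := by
    intro S hS v
    haveI := simple_toFDRep S hS
    haveI : Nontrivial S := IsSimpleModule.nontrivial (A K) S
    let Tlin : S →ₗ[ℂ] S :=
      { toFun := fun v => aElt f • v
        map_add' := fun v w => smul_add _ v w
        map_smul' := fun c v => by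
          apply Subtype.ext
          push_cast [Submodule.coe_smul]
          rw [smul_comm]
          rfl }
    let T : toFDRep S ⟶ toFDRep S :=
      ⟨FGModuleCat.ofHom Tlin, by
        intro g
        apply FGModuleCat.hom_ext
        refine LinearMap.ext fun (w : S) => ?_
        show aElt f • (single g (1:ℂ) : A K) • w = (single g (1:ℂ) : A K) • aElt f • w
        rw [← mul_smul, ← mul_smul, aElt_mul_single f hf]⟩
    obtain ⟨c, hc⟩ := CategoryTheory.endomorphism_simple_eq_smul_id (𝕜 := ℂ) T
    have hTsum : Tlin = ∑ h : K, f h • ((rhoS S h : S →ₗ[ℂ] S)) := by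
      apply LinearMap.ext
      intro w
      show aElt f • w = _
      rw [aElt, Finset.sum_smul, LinearMap.sum_apply]
      refine Finset.sum_congr rfl fun h _ => ?_
      rw [LinearMap.smul_apply, rhoS_apply, ← smul_assoc]
      congr 1
      rw [MonoidAlgebra.smul_single', mul_one]
    have htr : LinearMap.trace ℂ S Tlin = ∑ h : K, f h * (toFDRep S).character h := by
      rw [hTsum, map_sum]
      refine Finset.sum_congr rfl fun h _ => ?_
      rw [LinearMap.map_smul, smul_eq_mul]
      rfl
    have htr0 : LinearMap.trace ℂ S Tlin = 0 := by
      rw [htr]; exact h0 _ inferInstance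
    have hchom : Tlin = c • LinearMap.id (R := ℂ) (M := S) := by
      have := congrArg (fun t => t.hom.hom.hom) hc
      exact this.symm
    have hc0 : c = 0 := by
      have h2 : LinearMap.trace ℂ S Tlin = c * (Module.finrank ℂ S : ℂ) := by
        rw [hchom, LinearMap.map_smul, smul_eq_mul, LinearMap.trace_id]
      rw [htr0] at h2
      have hfr : (Module.finrank ℂ S : ℂ) ≠ 0 :=
        Nat.cast_ne_zero.mpr (Module.finrank_pos (R := ℂ) (M := S)).ne'
      exact (mul_eq_zero.mp h2.symm).resolve_right hfr
    show Tlin v = 0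
    rw [hchom, hc0, zero_smul, LinearMap.zero_apply]
  haveI : NeZero ((Fintype.card K : ℂ)) := ⟨Nat.cast_ne_zero.mpr Fintype.card_ne_zero⟩
  let Kk : Submodule (A K) (A K) :=
    { carrier := {v | aElt f * v = 0}
      add_mem' := fun {u} {w} hu hw => by
        show aElt f * (u + w) = 0
        rw [mul_add, hu, hw, add_zero]
      zero_mem' := by show aElt f * 0 = 0; rw [mul_zero]
      smul_mem' := fun b v hv => by
        show aElt f * (b * v) = 0
        rw [← mul_assoc, aElt_comm f hf b, mul_assoc, hv, mul_zero] }
  have htop : (⊤ : Submodule (A K) (A K)) ≤ Kk := by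
    rw [← IsSemisimpleModule.sSup_simples_eq_top]
    refine sSup_le ?_
    intro S hSsimple v hv
    show aElt f * v = 0
    have h2 := key S hSsimple ⟨v, hv⟩
    have h3 := congrArg (Subtype.val) h2
    simpa using h3
  have ha : aElt f = 0 := by
    have h1 := htop (Submodule.mem_top : (1 : A K) ∈ ⊤)
    have : aElt f * 1 = 0 := h1
    rwa [mul_one] at this
  have hg : (aElt f).coeff g = 0 := by rw [ha]; rfl
  rw [aElt, MonoidAlgebra.coeff_sum, Finset.sum_apply'] at hg
  rw [show (∑ h : K, (single h (f h) : A K).coeff g) = ∑ h : K, if h = g then f h else 0 from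
    Finset.sum_congr rfl fun h _ => Finsupp.single_apply] at hg
  rwa [Finset.sum_ite_eq' Finset.univ g f, if_pos (Finset.mem_univ g)] at hg

end StmtAux

open scoped Classical

namespace StmtAux

lemma sum_dite_subgroup {G : Type} [Group G] [Fintype G] (H : Subgroup G)
    [Fintype H] (g : (k : G) → k ∈ H → ℂ) :
    ∑ k : G, (if hk : k ∈ H then g k hk else 0) = ∑ h : H, g h h.2 := by
  have step : ∀ k : G, (if hk : k ∈ H then g k hk else 0)
      = ∑ h : H, (if (h : G) = k then g h h.2 else 0) := by
    intro k
    by_cases hk : k ∈ H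
    · rw [dif_pos hk]
      rw [Finset.sum_eq_single_of_mem (⟨k, hk⟩ : H) (Finset.mem_univ _)]
      · rw [if_pos rfl]
      · intro b _ hb
        rw [if_neg]
        intro hbk
        exact hb (Subtype.ext hbk)
    · rw [dif_neg hk]
      rw [eq_comm]
      refine Finset.sum_eq_zero fun h _ => ?_
      rw [if_neg]
      intro hhk
      exact hk (hhk ▸ h.2)
  rw [Finset.sum_congr rfl fun k _ => step k, Finset.sum_comm]
  refine Finset.sum_congr rfl fun h _ => ?_
  rw [Finset.sum_ite_eq Finset.univ (h : G) (fun _ => g h h.2), if_pos (Finset.mem_univ _)]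

lemma card_fiber {G : Type} [Group G] [Fintype G] [DecidableEq G] (γ k : G) :
    (((Finset.univ.filter (fun x : G => x⁻¹ * γ * x = k)).card) : ℂ)
      = if ∃ g : G, g * γ * g⁻¹ = k then
          (Nat.card (Subgroup.centralizer {γ} : Subgroup G) : ℂ) else 0 := by
  by_cases hex : ∃ g : G, g * γ * g⁻¹ = k
  · rw [if_pos hex]
    obtain ⟨g0, hg0⟩ := hex
    have hx0 : (g0⁻¹)⁻¹ * γ * g0⁻¹ = k := by rw [← hg0]; group
    set x0 := g0⁻¹ with hx0def
    have key : ∀ x : G, x⁻¹ * γ * x = k ↔ x * x0⁻¹ ∈ Subgroup.centralizer ({γ} : Set G) := by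
      intro x
      rw [Subgroup.mem_centralizer_iff]
      constructor
      · intro hx
        intro m hm
        rw [Set.mem_singleton_iff] at hm
        rw [hm]
        have h1 : γ * x = x * k := by rw [← hx]; group
        have h2 : γ * x0 = x0 * k := by rw [← hx0]; group
        have : γ * (x * x0⁻¹) = x * k * x0⁻¹ := by rw [← mul_assoc, h1]
        rw [this]
        have : x * k * x0⁻¹ = x * (x0⁻¹ * γ * x0) * x0⁻¹ := by
          rw [show x0⁻¹ * γ * x0 = k from hx0]
        rw [this]
        group
      · intro hc
        have hγ : γ * (x * x0⁻¹) = (x * x0⁻¹) * γ := hc γ (Set.mem_singleton γ)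
        have h2 : γ * x0 = x0 * k := by rw [← hx0]; group
        have : γ * x = x * x0⁻¹ * γ * x0 := by
          calc γ * x = γ * (x * x0⁻¹) * x0 := by group
          _ = x * x0⁻¹ * γ * x0 := by rw [hγ]
        calc x⁻¹ * γ * x = x⁻¹ * (γ * x) := by group
        _ = x⁻¹ * (x * x0⁻¹ * γ * x0) := by rw [this]
        _ = x0⁻¹ * (γ * x0) := by group
        _ = x0⁻¹ * (x0 * k) := by rw [h2]
        _ = k := by group
    have e : {x : G // x⁻¹ * γ * x = k} ≃ (Subgroup.centralizer ({γ} : Set G)) :=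
      { toFun := fun x => ⟨x.1 * x0⁻¹, (key x.1).mp x.2⟩
        invFun := fun u => ⟨u.1 * x0, by
          have := (key (u.1 * x0)).mpr
          apply this
          simpa using u.2⟩
        left_inv := fun x => by ext; simp
        right_inv := fun u => by ext; simp }
    rw [← Fintype.card_subtype]
    rw [Fintype.card_congr e, Nat.card_eq_fintype_card]
  · rw [if_neg hex]
    norm_cast
    rw [Finset.card_eq_zero, Finset.filter_eq_empty_iff]
    intro x _
    intro hx
    exact hex ⟨x⁻¹, by rw [← hx]; group⟩

end StmtAux

namespace StmtAux

open CategoryTheory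

lemma ortho {ι : Type} [Fintype ι] {K : Type} [Group K] [Fintype K] (V : ι → FDRep ℂ K)
    (hirr : ∀ i, Simple (V i)) (hdist : ∀ i j, Nonempty (V i ≅ V j) → i = j) (i j : ι) :
    ∑ h : K, (V i).character h * (V j).character h⁻¹
      = if i = j then ((Fintype.card K : ℂ)) else 0 := by
  have hne : (Nat.card K : ℂ) ≠ 0 := Nat.cast_ne_zero.mpr Nat.card_pos.ne'
  haveI := hirr i; haveI := hirr j
  have h := FDRep.char_orthonormal (k := ℂ) (G := K) (V i) (V j)
  have h2 := congrArg (fun z => (Nat.card K : ℂ) * z) h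
  simp only [← mul_assoc, mul_inv_cancel₀ hne, one_mul] at h2
  have h3 : (∑ g : K, (V i).character g * (V j).character g⁻¹)
      = if i = j then ((Fintype.card K : ℂ)) else 0 := by
    rw [h2, if_congr ⟨hdist i j, fun hij => hij ▸ ⟨Iso.refl _⟩⟩ rfl rfl]
    split_ifs with hij <;> simp
  exact h3

end StmtAux

/-- The restriction to a subgroup `H ≤ G` of the indicator function of the `G`-conjugacy
class of `γ` has Fourier expansion
`δ_{O(γ)}|_H = |C(γ)|⁻¹ ∑_{ρ ∈ Irr(H)} χ_ρ · Tr(Ind_H^G(ρ)(γ⁻¹))`. -/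
theorem stmt_6 {G : Type} [Group G] [Fintype G] [DecidableEq G]
    (H : Subgroup G) (γ : G)
    {ι : Type} [Fintype ι] (V : ι → FDRep ℂ H)
    (hirr : ∀ i, CategoryTheory.Simple (V i))
    (hdist : ∀ i j, Nonempty (V i ≅ V j) → i = j)
    (hcomplete : ∀ W : FDRep ℂ H, CategoryTheory.Simple W → ∃ i, Nonempty (W ≅ V i)) :
    ∀ h : H,
      (if ∃ g : G, g * γ * g⁻¹ = (h : G) then (1 : ℂ) else 0)
        = (Nat.card (Subgroup.centralizer {γ} : Subgroup G) : ℂ)⁻¹ *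
          ∑ i, (V i).character h *
            inducedCharacter H (fun x => (V i).character x) γ⁻¹ := by
  classical
  intro h₀
  letI : Fintype ↥H := Fintype.ofFinite ↥H
  have hN0 : ((Nat.card (Subgroup.centralizer {γ} : Subgroup G) : ℂ)) ≠ 0 :=
    Nat.cast_ne_zero.mpr Nat.card_pos.ne'
  have hH0 : ((Nat.card ↥H : ℂ)) ≠ 0 := Nat.cast_ne_zero.mpr Nat.card_pos.ne'
  set N : ℂ := (Nat.card (Subgroup.centralizer {γ} : Subgroup G) : ℂ) with hN
  set F : ↥H → ℂ := fun h => (if ∃ g : G, g * γ * g⁻¹ = (h : G) then (1 : ℂ) else 0)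
      - N⁻¹ * ∑ i, (V i).character h *
          inducedCharacter H (fun x => (V i).character x) γ⁻¹ with hF
  have hFclass : ∀ x y : ↥H, F (x * y * x⁻¹) = F y := by
    intro x y
    rw [hF]
    simp only
    congr 1
    · refine if_congr ?_ rfl rfl
      constructor
      · rintro ⟨g, hg⟩
        refine ⟨(↑x)⁻¹ * g, ?_⟩
        push_cast at hg ⊢
        rw [show ((↑x)⁻¹ * g)⁻¹ = g⁻¹ * ↑x by group, show (↑x)⁻¹ * g * γ * (g⁻¹ * ↑x)
          = (↑x)⁻¹ * (g * γ * g⁻¹) * ↑x by group, hg]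
        group
      · rintro ⟨g, hg⟩
        refine ⟨↑x * g, ?_⟩
        push_cast
        rw [show (↑x * g)⁻¹ = g⁻¹ * (↑x)⁻¹ by group, show (↑x : G) * g * γ * (g⁻¹ * (↑x)⁻¹)
          = ↑x * (g * γ * g⁻¹) * (↑x)⁻¹ by group, hg]
    · congr 1
      refine Finset.sum_congr rfl fun i _ => ?_
      rw [FDRep.char_conj]
  -- the key computation: pairing of F with each irreducible character vanishes
  have hpair : ∀ i, ∑ h : ↥H, F h * (V i).character h⁻¹ = 0 := by
    intro i
    rw [hF]
    simp only [sub_mul]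
    rw [Finset.sum_sub_distrib]
    rw [sub_eq_zero]
    set A : ℂ := ∑ h : ↥H,
        (if ∃ g : G, g * γ * g⁻¹ = (h : G) then (V i).character h⁻¹ else 0) with hA
    have hA' : ∑ h : ↥H, (if ∃ g : G, g * γ * g⁻¹ = (h : G) then (1 : ℂ) else 0)
        * (V i).character h⁻¹ = A := by
      rw [hA]
      refine Finset.sum_congr rfl fun h _ => ?_
      split_ifs <;> simp
    rw [hA']
    -- compute the right-hand pairing
    have hB : ∑ h : ↥H, (N⁻¹ * ∑ j, (V j).character h *
          inducedCharacter H (fun x => (V j).character x) γ⁻¹) * (V i).character h⁻¹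
        = N⁻¹ * ∑ j, inducedCharacter H (fun x => (V j).character x) γ⁻¹ *
            ∑ h : ↥H, (V j).character h * (V i).character h⁻¹ := by
      simp only [Finset.sum_mul, Finset.mul_sum]
      rw [Finset.sum_comm]
      refine Finset.sum_congr rfl fun j _ => Finset.sum_congr rfl fun h _ => by ring
    rw [hB, Finset.sum_congr rfl fun j (_ : j ∈ Finset.univ) => by
      rw [StmtAux.ortho V hirr hdist j i]]
    simp only [mul_ite, mul_zero]
    rw [Finset.sum_ite_eq' Finset.univ i
      (fun j => inducedCharacter H (fun x => (V j).character x) γ⁻¹ * (Fintype.card ↥H : ℂ)),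
      if_pos (Finset.mem_univ i)]
    -- unfold the induced character
    rw [inducedCharacter]
    have hcard : ((Fintype.card ↥H : ℂ)) = ((Nat.card ↥H : ℂ)) := by
      rw [Nat.card_eq_fintype_card]
    rw [hcard]
    -- counting over conjugates
    have hcount : (∑ x : G, if hx : x⁻¹ * γ⁻¹ * x ∈ H then
          (V i).character ⟨x⁻¹ * γ⁻¹ * x, hx⟩ else 0) = N * A := by
      have hΦ : ∀ x : G, (if hx : x⁻¹ * γ⁻¹ * x ∈ H then
            (V i).character ⟨x⁻¹ * γ⁻¹ * x, hx⟩ else 0)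
          = (fun k : G => if hk : k⁻¹ ∈ H then (V i).character ⟨k⁻¹, hk⟩ else 0)
              (x⁻¹ * γ * x) := by
        intro x
        simp only
        have hinv : (x⁻¹ * γ * x)⁻¹ = x⁻¹ * γ⁻¹ * x := by group
        rw [hinv]
      rw [Finset.sum_congr rfl fun x _ => hΦ x]
      set Φ : G → ℂ := fun k => if hk : k⁻¹ ∈ H then (V i).character ⟨k⁻¹, hk⟩ else 0 with hΦdef
      have step2 : ∑ x : G, Φ (x⁻¹ * γ * x)
          = ∑ k : G, (((Finset.univ.filter (fun x : G => x⁻¹ * γ * x = k)).card : ℂ)) * Φ k := by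
        have : ∀ x : G, Φ (x⁻¹ * γ * x)
            = ∑ k : G, if x⁻¹ * γ * x = k then Φ k else 0 := by
          intro x
          rw [Finset.sum_ite_eq Finset.univ (x⁻¹ * γ * x) Φ, if_pos (Finset.mem_univ _)]
        rw [Finset.sum_congr rfl fun x _ => this x, Finset.sum_comm]
        refine Finset.sum_congr rfl fun k _ => ?_
        rw [Finset.sum_ite, Finset.sum_const, Finset.sum_const_zero, add_zero,
          nsmul_eq_mul]
      rw [step2, Finset.sum_congr rfl fun k (_ : k ∈ Finset.univ) => by
        rw [StmtAux.card_fiber γ k]]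
      have step3 : ∑ k : G, (if ∃ g : G, g * γ * g⁻¹ = k then N else 0) * Φ k
          = N * ∑ k : G, (if ∃ g : G, g * γ * g⁻¹ = k then Φ k else 0) := by
        rw [Finset.mul_sum]
        refine Finset.sum_congr rfl fun k _ => ?_
        split_ifs <;> ring
      rw [step3]
      congr 1
      have step4 : ∀ k : G, (if ∃ g : G, g * γ * g⁻¹ = k then Φ k else 0)
          = (if hk : k ∈ H then
              (if ∃ g : G, g * γ * g⁻¹ = k then (V i).character (⟨k, hk⟩ : ↥H)⁻¹ else 0)
            else 0) := by
        intro k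
        by_cases hk : k ∈ H
        · rw [dif_pos hk, hΦdef]
          simp only
          rw [dif_pos (inv_mem hk)]
          rfl
        · rw [dif_neg hk, hΦdef]
          simp only
          rw [dif_neg (fun hik => hk (by simpa using inv_mem hik)), ite_self]
      rw [Finset.sum_congr rfl fun k _ => step4 k]
      rw [StmtAux.sum_dite_subgroup H (fun k hk =>
        if ∃ g : G, g * γ * g⁻¹ = k then (V i).character (⟨k, hk⟩ : ↥H)⁻¹ else 0)]
    rw [hcount]
    field_simp
  -- conclude via completeness of characters
  have h0' : ∀ W : FDRep ℂ ↥H, CategoryTheory.Simple W →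
      ∑ h : ↥H, (fun h => F h⁻¹) h * W.character h = 0 := by
    intro W hW
    obtain ⟨j, ⟨e⟩⟩ := hcomplete W hW
    have hchar : W.character = (V j).character := FDRep.char_iso e
    simp only [hchar]
    rw [Fintype.sum_equiv (Equiv.inv ↥H) _ (fun h => F h * (V j).character h⁻¹)
      (fun h => by simp)]
    exact hpair j
  have hf' : ∀ x y : ↥H, (fun h => F h⁻¹) (x * y * x⁻¹) = (fun h => F h⁻¹) y := by
    intro x y
    simp only
    rw [show (x * y * x⁻¹)⁻¹ = x * y⁻¹ * x⁻¹ by group, hFclass x y⁻¹]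
  have hz := StmtAux.classfn_eq_zero (K := ↥H) (fun h => F h⁻¹) hf' h0' h₀⁻¹
  simp only [inv_inv] at hz
  have h2 : F h₀ = 0 := hz
  rw [hF] at h2
  simp only at h2
  exact sub_eq_zero.mp h2
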